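/- Let G be an irregular graph with degree sequence (d_1,…,d_n). If the spectral radius ρ(G) satisfies ρ(G) ≥ √((1/n)∑ d_i²) (i.e. char_ρ(G) ≥ 2), and ρ(G) equals the 2-mean of the degree sequence, and G is connected, then G is semiregular bipartite. -/

import Mathlib

open Finset

attribute [local instance] Classical.propDecidable

def IsMaxEigenvalue {V : Type*} [Fintype V] (A : Matrix V V ℝ) (ρ : ℝ) : Prop :=
  IsGreatest {μ : ℝ | ∃ v : V → ℝ, v ≠ 0 ∧ A.mulVec v = μ • v} ρ

noncomputable def adjMat {V : Type*} (G : SimpleGraph V) : Matrix V V ℝ :=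
  Matrix.of fun v w => if G.Adj v w then 1 else 0

open Matrix RealInnerProductSpace

lemma walk_prop {V : Type*} {G : SimpleGraph V} (P : V → Prop)
    (hP : ∀ ⦃a b⦄, G.Adj a b → P a → P b) {v u : V} (p : G.Walk v u) (hv : P v) : P u := by
  induction p with
  | nil => exact hv
  | cons h p ih => exact ih (hP h hv)

section basic
variable {V : Type*} [Fintype V] (G : SimpleGraph V)

omit [Fintype V] in
lemma adj_sym : (adjMat G).IsHermitian := by
  ext i j
  simp [adjMat, Matrix.conjTranspose_apply, SimpleGraph.adj_comm]

omit [Fintype V] in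
lemma adj_nn : ∀ i j, (0:ℝ) ≤ adjMat G i j := by
  intro i j
  simp only [adjMat, Matrix.of_apply]
  split <;> norm_num

lemma adj_mulVec (f : V → ℝ) (v : V) :
    (adjMat G *ᵥ f) v = ∑ u, (if G.Adj v u then f u else 0) := by
  simp [adjMat, Matrix.mulVec, dotProduct, ite_mul]

lemma adj_mulVec_one (v : V) :
    (adjMat G *ᵥ (fun _ => (1:ℝ))) v = (G.degree v : ℝ) := by
  rw [adj_mulVec]
  simp only [SimpleGraph.degree, SimpleGraph.neighborFinset_eq_filter]
  rw [← Finset.sum_filter]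
  simp

lemma adj_dp_symm (f g : V → ℝ) :
    f ⬝ᵥ (adjMat G *ᵥ g) = (adjMat G *ᵥ f) ⬝ᵥ g := by
  simp only [dotProduct, Matrix.mulVec, dotProduct, Finset.mul_sum,
    Finset.sum_mul]
  rw [Finset.sum_comm]
  refine Finset.sum_congr rfl fun u _ => Finset.sum_congr rfl fun v _ => ?_
  rw [show (adjMat G) u v = adjMat G v u from by simp [adjMat, SimpleGraph.adj_comm]]
  ring

end basic

lemma spectral_key {V : Type*} [Fintype V] [DecidableEq V] (A : Matrix V V ℝ)
    (hA : A.IsHermitian) (hnn : ∀ i j, 0 ≤ A i j) (ρ : ℝ)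
    (hub : ∀ μ : ℝ, (∃ v : V → ℝ, v ≠ 0 ∧ A.mulVec v = μ • v) → μ ≤ ρ)
    (x : V → ℝ)
    (hx : (A *ᵥ x) ⬝ᵥ (A *ᵥ x) = ρ ^ 2 * (x ⬝ᵥ x)) :
    A *ᵥ (A *ᵥ x) = (ρ ^ 2) • x := by
  set b := hA.eigenvectorBasis with hb
  set μ := hA.eigenvalues with hμ
  have h1 : ∀ j, A *ᵥ ⇑(b j) = μ j • ⇑(b j) := hA.mulVec_eigenvectorBasis
  have h4 : ∀ (y z : EuclideanSpace ℝ V), ⟪y, z⟫ = ⇑y ⬝ᵥ ⇑z := by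
    intro y z
    simp [PiLp.inner_apply, dotProduct, mul_comm]
  have h3 : ∀ i j : V, ⇑(b i) ⬝ᵥ ⇑(b j) = if i = j then 1 else 0 := by
    intro i j
    rw [← h4]
    rcases eq_or_ne i j with h | h
    · rw [h, real_inner_self_eq_norm_sq, b.orthonormal.1 j]; simp
    · simp [h, b.orthonormal.2 h]
  have hrepr : ∀ y : V → ℝ, ∑ i, (⇑(b i) ⬝ᵥ y) • ⇑(b i) = y := by
    intro y
    have h := b.sum_repr' (WithLp.toLp 2 y)
    have h' : ∀ i, ⟪b i, (WithLp.toLp 2 y : EuclideanSpace ℝ V)⟫ = ⇑(b i) ⬝ᵥ y := fun i => h4 _ _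
    calc ∑ i, (⇑(b i) ⬝ᵥ y) • ⇑(b i) = ∑ i, ⟪b i, (WithLp.toLp 2 y : EuclideanSpace ℝ V)⟫ • ⇑(b i) := by
          simp_rw [h']
      _ = y := by simpa using congrArg WithLp.ofLp h
  have hdot : ∀ f g : V → ℝ, (∑ i, f i • ⇑(b i)) ⬝ᵥ (∑ i, g i • ⇑(b i)) = ∑ i, f i * g i := by
    intro f g
    have dpl : ∀ (F : V → V → ℝ) (z : V → ℝ), (∑ i, F i) ⬝ᵥ z = ∑ i, F i ⬝ᵥ z := by
      intro F z
      simp only [dotProduct, Finset.sum_apply, Finset.sum_mul]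
      exact Finset.sum_comm
    have dpr : ∀ (y : V → ℝ) (F : V → V → ℝ), y ⬝ᵥ (∑ i, F i) = ∑ i, y ⬝ᵥ F i := by
      intro y F
      simp only [dotProduct, Finset.sum_apply, Finset.mul_sum]
      exact Finset.sum_comm
    rw [dpl]
    simp_rw [dpr, smul_dotProduct, dotProduct_smul, h3]
    simp [mul_ite]
  have hmul : ∀ f : V → ℝ, A *ᵥ (∑ i, f i • ⇑(b i)) = ∑ i, (f i * μ i) • ⇑(b i) := by
    intro f
    rw [← Matrix.mulVecLin_apply, map_sum]
    apply Finset.sum_congr rfl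
    intro i _
    rw [_root_.map_smul, Matrix.mulVecLin_apply, h1 i, smul_smul]
  have hAy : ∀ y : V → ℝ, A *ᵥ y = ∑ i, ((⇑(b i) ⬝ᵥ y) * μ i) • ⇑(b i) := by
    intro y
    conv_lhs => rw [← hrepr y]
    exact hmul _
  have hray : ∀ y : V → ℝ, y ⬝ᵥ (A *ᵥ y) ≤ ρ * (y ⬝ᵥ y) := by
    intro y
    have hμρ : ∀ i, μ i ≤ ρ := by
      intro i
      apply hub
      refine ⟨⇑(b i), ?_, h1 i⟩
      intro h0
      have := h3 i i
      rw [h0] at this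
      simp at this
    have e1 : y ⬝ᵥ (A *ᵥ y) = ∑ i, (⇑(b i) ⬝ᵥ y) * ((⇑(b i) ⬝ᵥ y) * μ i) := by
      conv_lhs => rw [← hrepr y, hmul]
      exact hdot _ _
    have e2 : y ⬝ᵥ y = ∑ i, (⇑(b i) ⬝ᵥ y) * (⇑(b i) ⬝ᵥ y) := by
      conv_lhs => rw [← hrepr y]
      exact hdot _ _
    rw [e1, e2, Finset.mul_sum]
    apply Finset.sum_le_sum
    intro i _
    nlinarith [sq_nonneg (⇑(b i) ⬝ᵥ y), hμρ i]
  have habs : ∀ i, |μ i| ≤ ρ := by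
    intro i
    have hbi1 : ⇑(b i) ⬝ᵥ ⇑(b i) = (1 : ℝ) := by simpa using h3 i i
    set w : V → ℝ := fun v => |b i v| with hw
    have hww : w ⬝ᵥ w = 1 := by
      rw [← hbi1]
      simp only [dotProduct, hw]
      exact Finset.sum_congr rfl fun v _ => by rw [abs_mul_abs_self]
    have h6 : ⇑(b i) ⬝ᵥ (A *ᵥ ⇑(b i)) = μ i := by
      rw [h1 i, dotProduct_smul, hbi1]
      simp
    have h7 : |⇑(b i) ⬝ᵥ (A *ᵥ ⇑(b i))| ≤ w ⬝ᵥ (A *ᵥ w) := by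
      simp only [dotProduct, mulVec, dotProduct]
      calc |∑ v, b i v * ∑ u, A v u * b i u|
          ≤ ∑ v, |b i v * ∑ u, A v u * b i u| := Finset.abs_sum_le_sum_abs _ _
        _ ≤ ∑ v, w v * ∑ u, A v u * w u := by
            apply Finset.sum_le_sum
            intro v _
            rw [abs_mul]
            apply mul_le_mul_of_nonneg_left _ (abs_nonneg _)
            calc |∑ u, A v u * b i u| ≤ ∑ u, |A v u * b i u| := Finset.abs_sum_le_sum_abs _ _
              _ = ∑ u, A v u * w u := by
                  apply Finset.sum_congr rfl
                  intro u _
                  rw [abs_mul, abs_of_nonneg (hnn v u)]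
    have h8 := hray w
    rw [hww, mul_one] at h8
    rw [h6] at h7
    exact le_trans h7 h8
  -- now the equality case
  set c : V → ℝ := fun i => ⇑(b i) ⬝ᵥ x with hc
  have e1 : (A *ᵥ x) ⬝ᵥ (A *ᵥ x) = ∑ i, (c i * μ i) * (c i * μ i) := by
    rw [hAy x]
    exact hdot _ _
  have e2 : x ⬝ᵥ x = ∑ i, c i * c i := by
    conv_lhs => rw [← hrepr x]
    exact hdot _ _
  have key : ∑ i, (ρ ^ 2 - μ i ^ 2) * (c i) ^ 2 = 0 := by
    have : ∑ i, (ρ ^ 2 - μ i ^ 2) * (c i) ^ 2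
        = ρ ^ 2 * (x ⬝ᵥ x) - (A *ᵥ x) ⬝ᵥ (A *ᵥ x) := by
      rw [e1, e2, Finset.mul_sum, ← Finset.sum_sub_distrib]
      apply Finset.sum_congr rfl
      intro i _
      ring
    rw [this, hx]
    ring
  have hterm : ∀ i ∈ Finset.univ (α := V), (0:ℝ) ≤ (ρ ^ 2 - μ i ^ 2) * (c i) ^ 2 := by
    intro i _
    apply mul_nonneg _ (sq_nonneg _)
    have := habs i
    nlinarith [sq_abs (μ i), abs_nonneg (μ i)]
  have hzero : ∀ i, (μ i ^ 2) * c i = ρ ^ 2 * c i := by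
    intro i
    have := (Finset.sum_eq_zero_iff_of_nonneg hterm).mp key i (Finset.mem_univ i)
    rcases mul_eq_zero.mp this with h | h
    · nlinarith [h]
    · have : c i = 0 := by nlinarith [sq_nonneg (c i)]
      rw [this]; ring
  -- conclude
  conv_lhs => rw [hAy x, hmul]
  conv_rhs => rw [← hrepr x]
  rw [Finset.smul_sum]
  apply Finset.sum_congr rfl
  intro i _
  rw [smul_smul]
  congr 1
  have := hzero i
  nlinarith [this]

/-- If `G` is a connected irregular graph whose spectral radius is at least the
2-mean of its degree sequence and in fact equals it, then `G` is semiregular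
bipartite. -/
theorem stmt13 {V : Type*} [Fintype V] (G : SimpleGraph V)
    (hirr : ¬∃ d : ℕ, G.IsRegularOfDegree d) (hconn : G.Connected)
    (ρ : ℝ) (hρ : IsMaxEigenvalue (adjMat G) ρ)
    (hge : Real.sqrt ((1 / (Fintype.card V : ℝ)) * ∑ v, (G.degree v : ℝ) ^ 2) ≤ ρ)
    (heq : ρ = Real.sqrt ((1 / (Fintype.card V : ℝ)) * ∑ v, (G.degree v : ℝ) ^ 2)) :
    ∃ (s : Set V) (a b : ℕ),
      (∀ ⦃v w : V⦄, G.Adj v w → (v ∈ s ↔ w ∉ s)) ∧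
      (∀ v ∈ s, G.degree v = a) ∧ (∀ v, v ∉ s → G.degree v = b) := by
  classical
  have hne : Nonempty V := hconn.nonempty
  set A := adjMat G with hA
  set d : V → ℝ := fun v => (G.degree v : ℝ) with hd
  have hd0 : ∀ v, 0 ≤ d v := fun v => Nat.cast_nonneg _
  have hn : (0:ℝ) < Fintype.card V := by
    have : 0 < Fintype.card V := Fintype.card_pos
    exact_mod_cast this
  have hA1 : A *ᵥ (fun _ => (1:ℝ)) = d := funext (adj_mulVec_one G)
  have hρ0 : 0 ≤ ρ := le_trans (Real.sqrt_nonneg _) hge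
  have hρ2 : ρ ^ 2 = (1 / (Fintype.card V : ℝ)) * ∑ v, d v ^ 2 := by
    rw [heq, Real.sq_sqrt]
    positivity
  -- A² 1 = ρ² 1
  have hkey : A *ᵥ (A *ᵥ (fun _ => (1:ℝ))) = (ρ ^ 2) • (fun _ => (1:ℝ)) := by
    apply spectral_key A (adj_sym G) (adj_nn G) ρ (fun μ hμ => hρ.2 hμ)
    rw [hA1]
    have e1 : d ⬝ᵥ d = ∑ v, d v ^ 2 := by
      simp [dotProduct, sq]
    have e2 : ((fun _ => (1:ℝ)) : V → ℝ) ⬝ᵥ ((fun _ => (1:ℝ)) : V → ℝ) = (Fintype.card V : ℝ) := by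
      simp [dotProduct]
    rw [e1, e2, hρ2, one_div, inv_mul_eq_div, div_mul_cancel₀ _ hn.ne']
  have hAd : A *ᵥ d = fun _ => ρ ^ 2 := by
    rw [← hA1, hkey]
    funext v
    simp
  -- ρ > 0
  have hρpos : 0 < ρ := by
    rcases hρ0.lt_or_eq with h | h
    · exact h
    · exfalso
      apply hirr
      have hsum : ∑ v, d v ^ 2 = 0 := by
        have := hρ2
        rw [← h] at this
        field_simp at this
        simpa using this.symm
      refine ⟨0, fun v => ?_⟩
      have hv : d v ^ 2 = 0 :=
        (Finset.sum_eq_zero_iff_of_nonneg (fun v _ => sq_nonneg (d v))).mp hsum v (mem_univ v)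
      have : d v = 0 := by nlinarith [hv]
      simpa [hd, SimpleGraph.IsRegularOfDegree] using Nat.cast_eq_zero.mp this
  set y' : V → ℝ := fun v => ρ - d v with hy'
  have hAy' : A *ᵥ y' = (-ρ) • y' := by
    have h1 : y' = (ρ • fun _ => (1:ℝ)) - d := by funext v; simp [hy']
    rw [h1, Matrix.mulVec_sub, Matrix.mulVec_smul, hA1, hAd]
    funext v
    simp [hy']
    ring
  have hy'ne : y' ≠ 0 := by
    intro h0
    apply hirr
    obtain ⟨v0⟩ := hne
    refine ⟨G.degree v0, fun v => ?_⟩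
    have e1 : d v = ρ := by have := congrFun h0 v; simp [hy'] at this; linarith
    have e2 : d v0 = ρ := by have := congrFun h0 v0; simp [hy'] at this; linarith
    have h3 : (G.degree v : ℝ) = (G.degree v0 : ℝ) := by
      simp only [hd] at e1 e2 ⊢
      rw [e1, e2]
    exact_mod_cast h3
  set w : V → ℝ := fun v => |y' v| with hw
  have hw0 : ∀ v, 0 ≤ w v := fun v => abs_nonneg _
  have hAy'v : ∀ v, (A *ᵥ y') v = -ρ * y' v := by
    intro v; rw [hAy']; simp
  have hAw_ge : ∀ v, ρ * w v ≤ (A *ᵥ w) v := by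
    intro v
    have h1 : (A *ᵥ w) v = ∑ u, (if G.Adj v u then w u else 0) := adj_mulVec G w v
    have h2 : |(A *ᵥ y') v| ≤ (A *ᵥ w) v := by
      rw [h1, adj_mulVec]
      calc |∑ u, (if G.Adj v u then y' u else 0)|
          ≤ ∑ u, |if G.Adj v u then y' u else 0| := Finset.abs_sum_le_sum_abs _ _
        _ = ∑ u, (if G.Adj v u then w u else 0) := by
            refine Finset.sum_congr rfl fun u _ => ?_
            split <;> simp [hw]
    rw [hAy'v v, abs_mul, abs_neg, abs_of_pos hρpos] at h2
    exact h2
  set y : V → ℝ := fun v => ρ + d v with hyy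
  have hypos : ∀ v, 0 < y v := fun v => by have := hd0 v; simp [hyy]; linarith
  have hAyv : A *ᵥ y = ρ • y := by
    have h1 : y = (ρ • fun _ => (1:ℝ)) + d := by funext v; simp [hyy]
    rw [h1, Matrix.mulVec_add, Matrix.mulVec_smul, hA1, hAd]
    funext v
    simp [hyy]
    ring
  -- equality in Rayleigh-type argument: A w = ρ w
  have hAw : ∀ v, (A *ᵥ w) v = ρ * w v := by
    have hsum0 : ∑ v, y v * ((A *ᵥ w) v - ρ * w v) = 0 := by
      have e1 : ∑ v, y v * ((A *ᵥ w) v - ρ * w v)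
          = y ⬝ᵥ (A *ᵥ w) - ρ * (y ⬝ᵥ w) := by
        simp only [dotProduct, Finset.mul_sum, ← Finset.sum_sub_distrib]
        refine Finset.sum_congr rfl fun v _ => by ring
      rw [e1, adj_dp_symm G y w, hAyv]
      have : (ρ • y) ⬝ᵥ w = ρ * (y ⬝ᵥ w) := by
        simp [dotProduct, Finset.mul_sum, mul_assoc]
      rw [this]
      ring
    intro v
    have hterm : ∀ u ∈ Finset.univ (α := V), 0 ≤ y u * ((A *ᵥ w) u - ρ * w u) := by
      intro u _
      have := hAw_ge u
      have := (hypos u).le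
      nlinarith
    have := (Finset.sum_eq_zero_iff_of_nonneg hterm).mp hsum0 v (mem_univ v)
    have hyv := hypos v
    have h3 := hAw_ge v
    nlinarith
  have hAwfun : A *ᵥ w = ρ • w := funext fun v => by rw [hAw v]; simp
  -- w is everywhere positive
  have hwpos : ∀ v, 0 < w v := by
    by_contra hcon
    push_neg at hcon
    obtain ⟨v1, hv1⟩ := hcon
    have hv1' : w v1 = 0 := le_antisymm hv1 (hw0 v1)
    have hprop : ∀ ⦃a b : V⦄, G.Adj a b → w a = 0 → w b = 0 := by
      intro a b hab ha
      have h1 : ∑ u, (if G.Adj a u then w u else 0) = 0 := by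
        rw [← adj_mulVec G w a, hAw a, ha, mul_zero]
      have h2 : ∀ u ∈ Finset.univ (α := V), 0 ≤ (if G.Adj a u then w u else 0) := by
        intro u _
        split
        · exact hw0 u
        · exact le_rfl
      have := (Finset.sum_eq_zero_iff_of_nonneg h2).mp h1 b (mem_univ b)
      rw [if_pos hab] at this
      exact this
    apply hy'ne
    funext v
    have hwv : w v = 0 := walk_prop _ hprop ((hconn v1 v).some) hv1'
    have : |y' v| = 0 := hwv
    simpa using abs_eq_zero.mp this
  -- minimum ratio
  set r : V → ℝ := fun v => y v / w v with hr
  have hune : (Finset.univ (α := V)).Nonempty := Finset.univ_nonempty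
  set t : ℝ := Finset.univ.inf' hune r with htdef
  have ht_le : ∀ v, t ≤ r v := fun v => Finset.inf'_le _ (mem_univ v)
  obtain ⟨v0, -, hv0⟩ := Finset.exists_mem_eq_inf' hune r
  have ht0 : t = y v0 / w v0 := htdef.trans hv0
  have htpos : 0 < t := by
    rw [ht0]
    exact div_pos (hypos v0) (hwpos v0)
  set z : V → ℝ := fun v => y v - t * w v with hz
  have hz0 : ∀ v, 0 ≤ z v := by
    intro v
    have := ht_le v
    rw [hr] at this
    have := (le_div_iff₀ (hwpos v)).mp this
    simp only [hz]
    linarith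
  have hzv0 : z v0 = 0 := by
    show y v0 - t * w v0 = 0
    rw [ht0, div_mul_cancel₀ _ (hwpos v0).ne', sub_self]
  have hAz : ∀ v, (adjMat G *ᵥ z) v = ρ * z v := by
    intro v
    have h1 : z = y - t • w := by funext u; simp [hz]
    rw [h1, Matrix.mulVec_sub, Matrix.mulVec_smul, hAyv, hAwfun]
    simp [hz]
    ring
  have hzall : ∀ v, z v = 0 := by
    intro v
    have hprop : ∀ ⦃a b : V⦄, G.Adj a b → z a = 0 → z b = 0 := by
      intro a b hab ha
      have h1 : ∑ u, (if G.Adj a u then z u else 0) = 0 := by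
        rw [← adj_mulVec G z a, hAz a, ha, mul_zero]
      have h2 : ∀ u ∈ Finset.univ (α := V), 0 ≤ (if G.Adj a u then z u else 0) := by
        intro u _
        split
        · exact hz0 u
        · exact le_rfl
      have := (Finset.sum_eq_zero_iff_of_nonneg h2).mp h1 b (mem_univ b)
      rw [if_pos hab] at this
      exact this
    exact walk_prop _ hprop ((hconn v0 v).some) hzv0
  have hyw : ∀ v, y v = t * w v := by
    intro v
    have := hzall v
    simp only [hz] at this
    linarith
  -- y' never vanishes
  have hy'ne0 : ∀ v, y' v ≠ 0 := by
    intro v h0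
    have := hwpos v
    rw [hw] at this
    simp only [h0, abs_zero] at this
    exact lt_irrefl 0 this
  -- sign flip across edges
  set s : Set V := {v | y' v < 0} with hs
  have hsum12 : ∀ v : V, (∑ u, (if G.Adj v u then (w u + y' u) else 0) = ρ * (w v - y' v))
      ∧ (∑ u, (if G.Adj v u then (w u - y' u) else 0) = ρ * (w v + y' v)) := by
    intro v
    have e1 : (adjMat G *ᵥ w) v = ρ * w v := hAw v
    have e2 : (adjMat G *ᵥ y') v = -ρ * y' v := hAy'v v
    rw [adj_mulVec] at e1 e2
    constructor
    · have : ∑ u, (if G.Adj v u then (w u + y' u) else 0)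
          = (∑ u, (if G.Adj v u then w u else 0)) + ∑ u, (if G.Adj v u then y' u else 0) := by
        rw [← Finset.sum_add_distrib]
        refine Finset.sum_congr rfl fun u _ => ?_
        split <;> ring
      rw [this, e1, e2]
      ring
    · have : ∑ u, (if G.Adj v u then (w u - y' u) else 0)
          = (∑ u, (if G.Adj v u then w u else 0)) - ∑ u, (if G.Adj v u then y' u else 0) := by
        rw [← Finset.sum_sub_distrib]
        refine Finset.sum_congr rfl fun u _ => ?_
        split <;> ring
      rw [this, e1, e2]
      ring
  have hcase1 : ∀ ⦃v u : V⦄, G.Adj v u → y' v < 0 → 0 < y' u := by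
    intro v u hadj hv
    have h2 := (hsum12 v).2
    have hwv : w v = -y' v := abs_of_neg hv
    rw [hwv] at h2
    have h2' : ∑ u, (if G.Adj v u then (w u - y' u) else 0) = 0 := by rw [h2]; ring
    have hterm : ∀ u ∈ Finset.univ (α := V), 0 ≤ (if G.Adj v u then (w u - y' u) else 0) := by
      intro u _
      split
      · have := le_abs_self (y' u); rw [hw]; simp; linarith [le_abs_self (y' u)]
      · exact le_rfl
    have := (Finset.sum_eq_zero_iff_of_nonneg hterm).mp h2' u (mem_univ u)
    rw [if_pos hadj] at this
    have hwu : w u = y' u := by linarith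
    have := hwpos u
    rw [hwu] at this
    exact this
  have hcase2 : ∀ ⦃v u : V⦄, G.Adj v u → 0 < y' v → y' u < 0 := by
    intro v u hadj hv
    have h2 := (hsum12 v).1
    have hwv : w v = y' v := abs_of_pos hv
    rw [hwv] at h2
    have h2' : ∑ u, (if G.Adj v u then (w u + y' u) else 0) = 0 := by rw [h2]; ring
    have hterm : ∀ u ∈ Finset.univ (α := V), 0 ≤ (if G.Adj v u then (w u + y' u) else 0) := by
      intro u _
      split
      · linarith [neg_abs_le (y' u)]
      · exact le_rfl
    have := (Finset.sum_eq_zero_iff_of_nonneg hterm).mp h2' u (mem_univ u)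
    rw [if_pos hadj] at this
    have hwu : w u = -y' u := by linarith
    have := hwpos u
    rw [hwu] at this
    linarith
  have hflip : ∀ ⦃v u : V⦄, G.Adj v u → (v ∈ s ↔ u ∉ s) := by
    intro v u hadj
    constructor
    · intro hv
      have := hcase1 hadj hv
      simp only [hs, Set.mem_setOf_eq]
      intro h
      linarith
    · intro hu
      simp only [hs, Set.mem_setOf_eq] at hu ⊢
      push_neg at hu
      rcases lt_or_gt_of_ne (hy'ne0 u) with h | h
      · linarith
      · by_contra hv
        push_neg at hv
        rcases lt_or_gt_of_ne (hy'ne0 v) with h' | h'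
        · linarith
        · exact absurd (hcase2 hadj h') (not_lt.mpr (le_of_lt h))
  -- degree constancy
  have ht1 : ∀ v ∈ s, d v * (t - 1) = ρ * (1 + t) := by
    intro v hv
    simp only [hs, Set.mem_setOf_eq, hy'] at hv
    have h1 := hyw v
    have hwv : w v = d v - ρ := by
      show |y' v| = d v - ρ
      rw [abs_of_neg (by show ρ - d v < 0; linarith)]
      show -(ρ - d v) = d v - ρ
      ring
    rw [hwv] at h1
    have h1' : ρ + d v = t * (d v - ρ) := h1
    linear_combination -h1'
  have ht2 : ∀ v, v ∉ s → d v * (1 + t) = ρ * (t - 1) := by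
    intro v hv
    simp only [hs, Set.mem_setOf_eq, hy'] at hv
    push_neg at hv
    have hpos : 0 < y' v := by
      rcases lt_or_gt_of_ne (hy'ne0 v) with h | h
      · exact absurd (by simpa [hy'] using h) (not_lt.mpr (by simpa [hy'] using hv))
      · exact h
    have h1 := hyw v
    have hwv : w v = ρ - d v := by
      show |y' v| = ρ - d v
      rw [abs_of_pos hpos]
    rw [hwv] at h1
    have h1' : ρ + d v = t * (ρ - d v) := h1
    linear_combination h1'
  have htne1 : ∀ v ∈ s, t ≠ 1 := by
    intro v hv h1
    have h2 := ht1 v hv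
    rw [h1] at h2
    have h3 : (0:ℝ) = ρ * 2 := by linear_combination h2
    linarith
  have hconst1 : ∀ v ∈ s, ∀ v' ∈ s, d v = d v' := by
    intro v hv v' hv'
    have e1 := ht1 v hv
    have e2 := ht1 v' hv'
    have ht := htne1 v hv
    have : (t - 1) ≠ 0 := sub_ne_zero.mpr ht
    have : d v * (t-1) = d v' * (t-1) := by rw [e1, e2]
    exact mul_right_cancel₀ ‹(t - 1) ≠ 0› this
  have hconst2 : ∀ v, v ∉ s → ∀ v', v' ∉ s → d v = d v' := by
    intro v hv v' hv'
    have e1 := ht2 v hv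
    have e2 := ht2 v' hv'
    have : (1 + t) ≠ 0 := by positivity
    have h3 : d v * (1+t) = d v' * (1+t) := by rw [e1, e2]
    exact mul_right_cancel₀ ‹(1 + t) ≠ 0› h3
  -- assemble
  set a : ℕ := if h : ∃ v, v ∈ s then G.degree h.choose else 0 with ha
  set b : ℕ := if h : ∃ v, v ∉ s then G.degree h.choose else 0 with hb
  refine ⟨s, a, b, hflip, ?_, ?_⟩
  · intro v hv
    have hex : ∃ u, u ∈ s := ⟨v, hv⟩
    rw [ha, dif_pos hex]
    have h5 : (G.degree v : ℝ) = (G.degree hex.choose : ℝ) :=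
      hconst1 v hv hex.choose hex.choose_spec
    exact_mod_cast h5
  · intro v hv
    have hex : ∃ u, u ∉ s := ⟨v, hv⟩
    rw [hb, dif_pos hex]
    have h5 : (G.degree v : ℝ) = (G.degree hex.choose : ℝ) :=
      hconst2 v hv hex.choose hex.choose_spec
    exact_mod_cast h5
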